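/- Let W be a finite vertex set with s, t ∈ W, let m ≥ 1 be an integer, and let F : W × W → ℕ be the edge-multiplicity function of an acyclic directed multigraph that is the (edge-multiplicity) sum of m directed paths from s to t, such that every vertex of W lies on strictly more than m/2 of these paths. Then for any enumeration w_1, w_2, …, w_r of W that is a topological order of F (i.e., F(w_i, w_j) ≥ 1 implies i < j), we have F(w_i, w_{i+1}) ≥ 1 for every 1 ≤ i < r; that is, consecutive vertices in the topological order are joined by an edge of F. (The key claim in the proof of the paper's Theorem 1.) -/

import Mathlib

open Finset

/-- The number of times the ordered pair `(a, b)` occurs as a consecutive pair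
of vertices in the walk `p`. -/
def pathEdges {V : Type*} [DecidableEq V] (p : List V) (a b : V) : ℕ :=
  (p.zip p.tail).count (a, b)

/-- The multigraph with edge multiplicities `F` contains a directed cycle all
of whose edges have positive multiplicity. -/
def HasPosCycle {V : Type*} (F : V → V → ℕ) : Prop :=
  ∃ (v : V) (c : List V), List.Chain (fun a b => 1 ≤ F a b) v (c ++ [v])

/-- Key claim in the proof of the paper's Theorem 1: if the acyclic multigraph
`F` on `W` is a sum of `m` directed `s`-`t` paths and every vertex lies on
strictly more than `m/2` of them, then any two consecutive vertices of a
topological order of `F` are joined by an edge of `F`. -/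
theorem topological_consecutive_edges {W : Type*} [Fintype W] [DecidableEq W]
    (s t : W) (hst : s ≠ t)
    (m : ℕ) (hm : 1 ≤ m)
    (F : W → W → ℕ) (hacyc : ¬ HasPosCycle F)
    (D : Fin m → List W)
    (hends : ∀ i, (D i).head? = some s ∧ (D i).getLast? = some t)
    (hdecomp : ∀ a b, ∑ i, pathEdges (D i) a b = F a b)
    (hcover : ∀ v : W,
      (m : ℝ) / 2 < (({i | v ∈ D i} : Finset (Fin m)).card : ℝ))
    (e : List W) (hnodup : e.Nodup) (hall : ∀ v : W, v ∈ e)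
    (htopo : ∀ i j : Fin e.length, 1 ≤ F (e.get i) (e.get j) → (i : ℕ) < j) :
    ∀ i : ℕ, ∀ h : i + 1 < e.length,
      1 ≤ F (e.get ⟨i, by omega⟩) (e.get ⟨i + 1, h⟩) := by
  classical
  -- Every consecutive pair along any of the paths is an edge of `F`.
  have hedge : ∀ (j : Fin m) (k : ℕ) (hk : k + 1 < (D j).length),
      1 ≤ F ((D j)[k]'(by omega)) ((D j)[k+1]'hk) := by
    intro j k hk
    have hlt : k < ((D j).zip (D j).tail).length := by
      simp [List.length_zip, List.length_tail]; omega
    have hmem : (((D j)[k]'(by omega)), ((D j)[k+1]'hk)) ∈ (D j).zip (D j).tail := by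
      refine List.mem_iff_getElem.mpr ⟨k, hlt, ?_⟩
      rw [List.getElem_zip, List.getElem_tail]
    have h1 : 1 ≤ pathEdges (D j) ((D j)[k]'(by omega)) ((D j)[k+1]'hk) :=
      List.count_pos_iff.mpr hmem
    calc 1 ≤ pathEdges (D j) ((D j)[k]'(by omega)) ((D j)[k+1]'hk) := h1
      _ ≤ ∑ i, pathEdges (D i) ((D j)[k]'(by omega)) ((D j)[k+1]'hk) :=
          Finset.single_le_sum
            (f := fun i => pathEdges (D i) ((D j)[k]'(by omega)) ((D j)[k+1]'hk))
            (fun _ _ => Nat.zero_le _) (Finset.mem_univ j)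
      _ = F _ _ := hdecomp _ _
  -- The topological index strictly increases along each path.
  have hmono : ∀ (j : Fin m) (k : ℕ) (hk : k + 1 < (D j).length),
      e.idxOf ((D j)[k]'(by omega)) < e.idxOf ((D j)[k+1]'hk) := by
    intro j k hk
    have ha : e.idxOf ((D j)[k]'(by omega)) < e.length :=
      List.idxOf_lt_length_iff.2 (hall _)
    have hb : e.idxOf ((D j)[k+1]'hk) < e.length :=
      List.idxOf_lt_length_iff.2 (hall _)
    refine htopo ⟨_, ha⟩ ⟨_, hb⟩ ?_
    simpa [List.get_eq_getElem, List.getElem_idxOf ha, List.getElem_idxOf hb]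
      using hedge j k hk
  have hmono2 : ∀ (j : Fin m) (r q : ℕ) (hr : r < (D j).length) (hqr : q < r),
      e.idxOf ((D j)[q]'(hqr.trans hr)) < e.idxOf ((D j)[r]'hr) := by
    intro j r
    induction r with
    | zero => intro q hr hqr; omega
    | succ n ih =>
      intro q hr hqr
      have hstep := hmono j n hr
      rcases Nat.lt_succ_iff_lt_or_eq.mp hqr with h | h
      · exact lt_trans (ih q (by omega) h) hstep
      · subst h; exact hstep
  intro i hi
  have hlen : i < e.length := by omega
  set u := e.get ⟨i, hlen⟩ with hu
  set w := e.get ⟨i+1, hi⟩ with hw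
  have hiu : e.idxOf u = i := by
    simpa [hu, List.get_eq_getElem] using List.Nodup.idxOf_getElem hnodup i hlen
  have hiw : e.idxOf w = i + 1 := by
    simpa [hw, List.get_eq_getElem] using List.Nodup.idxOf_getElem hnodup (i+1) hi
  -- find a path containing both u and w
  obtain ⟨j, hju, hjw⟩ : ∃ j : Fin m, u ∈ D j ∧ w ∈ D j := by
    by_contra hcon
    push_neg at hcon
    set A : Finset (Fin m) := {i | u ∈ D i}
    set B : Finset (Fin m) := {i | w ∈ D i}
    have hdisj : Disjoint A B := by
      rw [Finset.disjoint_left]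
      intro a ha hb
      simp only [A, B, Finset.mem_filter] at ha hb
      exact hcon a (by simpa [A] using ha) (by simpa [B] using hb)
    have hAB : A.card + B.card ≤ m := by
      have := Finset.card_union_of_disjoint hdisj ▸ Finset.card_le_univ (A ∪ B)
      simpa [Fintype.card_fin] using this
    have h1 := hcover u
    have h2 := hcover w
    have : (m : ℝ) < (A.card : ℝ) + (B.card : ℝ) := by
      simp only [A, B] at *; linarith
    have : (m : ℝ) < ((A.card + B.card : ℕ) : ℝ) := by push_cast; linarith
    exact absurd (Nat.cast_lt.mp this) (not_lt.mpr hAB)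
  obtain ⟨qu, hqu, hque⟩ := List.mem_iff_getElem.mp hju
  obtain ⟨qw, hqw, hqwe⟩ := List.mem_iff_getElem.mp hjw
  have hne : qu < qw := by
    rcases lt_trichotomy qu qw with h | h | h
    · exact h
    · exfalso; subst h
      have huw : u = w := hque.symm.trans hqwe
      rw [← huw, hiu] at hiw
      omega
    · exfalso
      have := hmono2 j qu qw hqu h
      rw [hque, hqwe, hiu, hiw] at this; omega
  have hq1 : qu + 1 < (D j).length := by omega
  have hstep := hmono j qu hq1
  rw [hque, hiu] at hstep
  have hnext : (D j)[qu+1]'hq1 = w := by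
    rcases eq_or_lt_of_le (Nat.succ_le_of_lt hne) with h | h
    · subst h; exact hqwe
    · exfalso
      have := hmono2 j qw (qu+1) hqw h
      rw [hqwe, hiw] at this; omega
  have := hedge j qu hq1
  rwa [hque, hnext] at this
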